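/- arXiv:1105.5055 — 4 statements merged into one kernel-verified Lean document; each statement's English description precedes it below -/
import Mathlib

section
/- If F is reachable from S₀ in the automaton, then the antichain algorithm detects it: there exists k such that R̃ₖ ∩ F ≠ ∅, where R̃₀ = {S₀} and R̃ᵢ = Max⪰(R̃ᵢ₋₁ ∪ Post(R̃ᵢ₋₁)). -/
def Post {V : Type*} (E : V → V → Prop) (B : Set V) : Set V :=
  {s' | ∃ s ∈ B, E s s'}

/-- `sim` is a simulation relation for the automaton `⟨V, E, S₀, F⟩`. -/
def IsSimulation {V : Type*} (E : V → V → Prop) (F : Set V)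
    (sim : V → V → Prop) : Prop :=
  (∀ s, sim s s) ∧
  (∀ a b c, sim a b → sim b c → sim a c) ∧
  (∀ S1 S2 S3, E S1 S2 → sim S3 S1 → ∃ S4, E S3 S4 ∧ sim S4 S2) ∧
  (∀ S1 S2, sim S1 S2 → S2 ∈ F → S1 ∈ F)

/-- Maximal elements of `B` w.r.t. the preorder `sim`. -/
def MaxElt {V : Type*} (sim : V → V → Prop) (B : Set V) : Set V :=
  {S ∈ B | ¬ ∃ S' ∈ B, sim S' S ∧ ¬ sim S S'}

/-- Breadth-first iterates `R₀ = {S₀}`, `Rᵢ₊₁ = Rᵢ ∪ Post(Rᵢ)`. -/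
def Riter {V : Type*} (E : V → V → Prop) (S0 : V) : ℕ → Set V
  | 0 => {S0}
  | i + 1 => Riter E S0 i ∪ Post E (Riter E S0 i)

/-- Antichain breadth-first iterates `R̃₀ = {S₀}`, `R̃ᵢ₊₁ = Max(R̃ᵢ ∪ Post(R̃ᵢ))`. -/
def Rtiter {V : Type*} (E : V → V → Prop) (sim : V → V → Prop) (S0 : V) :
    ℕ → Set V
  | 0 => {S0}
  | i + 1 => MaxElt sim (Rtiter E sim S0 i ∪ Post E (Rtiter E sim S0 i))


lemma exists_maxElt {V : Type*} [Finite V] {sim : V → V → Prop}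
    (hrefl : ∀ s, sim s s) (htrans : ∀ a b c, sim a b → sim b c → sim a c)
    (B : Set V) {x : V} (hx : x ∈ B) : ∃ m ∈ MaxElt sim B, sim m x := by
  have hwf : WellFounded (fun a b : V => sim a b ∧ ¬ sim b a) := by
    haveI ht : IsTrans V (fun a b : V => sim a b ∧ ¬ sim b a) :=
      ⟨fun a b c hab hbc => ⟨htrans _ _ _ hab.1 hbc.1,
        fun h => hbc.2 (htrans _ _ _ h hab.1)⟩⟩
    haveI hi : IsIrrefl V (fun a b : V => sim a b ∧ ¬ sim b a) :=
      ⟨fun a h => h.2 (hrefl a)⟩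
    exact Finite.wellFounded_of_trans_of_irrefl _
  refine hwf.induction (C := fun x => x ∈ B → ∃ m ∈ MaxElt sim B, sim m x) x ?_ hx
  intro x ih hx
  by_cases hmax : ∃ S' ∈ B, sim S' x ∧ ¬ sim x S'
  · obtain ⟨S', hS'B, h1, h2⟩ := hmax
    obtain ⟨m, hm, hms⟩ := ih S' ⟨h1, h2⟩ hS'B
    exact ⟨m, hm, htrans _ _ _ hms h1⟩
  · exact ⟨x, ⟨hx, hmax⟩, hrefl x⟩

lemma rt_dominates {V : Type*} [Finite V] {E : V → V → Prop} {F : Set V}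
    {sim : V → V → Prop} (hsim : IsSimulation E F sim) (S0 : V) :
    ∀ k, ∀ s ∈ Riter E S0 k, ∃ t ∈ Rtiter E sim S0 k, sim t s := by
  obtain ⟨hrefl, htrans, hstep, _⟩ := hsim
  intro k
  induction k with
  | zero => intro s hs; exact ⟨S0, rfl, hs ▸ hrefl s⟩
  | succ k ih =>
      intro s hs
      have key : ∀ u ∈ (Rtiter E sim S0 k ∪ Post E (Rtiter E sim S0 k)),
          ∃ m ∈ Rtiter E sim S0 (k + 1), sim m u := fun u hu =>
        exists_maxElt hrefl htrans _ hu
      rcases hs with hs | hs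
      · obtain ⟨t, ht, hts⟩ := ih s hs
        obtain ⟨m, hm, hmt⟩ := key t (Or.inl ht)
        exact ⟨m, hm, htrans _ _ _ hmt hts⟩
      · obtain ⟨s1, hs1, hE⟩ := hs
        obtain ⟨t1, ht1, ht1s1⟩ := ih s1 hs1
        obtain ⟨t2, hEt, ht2s⟩ := hstep s1 s t1 hE ht1s1
        obtain ⟨m, hm, hmt2⟩ := key t2 (Or.inr ⟨t1, ht1, hEt⟩)
        exact ⟨m, hm, htrans _ _ _ hmt2 ht2s⟩

lemma reach_Riter {V : Type*} {E : V → V → Prop} {S0 f : V}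
    (h : Relation.ReflTransGen E S0 f) : ∃ k, f ∈ Riter E S0 k := by
  induction h with
  | refl => exact ⟨0, rfl⟩
  | tail _ hE ih =>
      obtain ⟨k, hk⟩ := ih
      exact ⟨k + 1, Or.inr ⟨_, hk, hE⟩⟩

theorem stmt6 {V : Type*} [Fintype V] (E : V → V → Prop) (F : Set V)
    (sim : V → V → Prop) (hsim : IsSimulation E F sim) (S0 : V)
    (hreach : ∃ f ∈ F, Relation.ReflTransGen E S0 f) :
    ∃ k : ℕ, (Rtiter E sim S0 k ∩ F).Nonempty := by
  obtain ⟨f, hfF, hpath⟩ := hreach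
  obtain ⟨k, hk⟩ := reach_Riter hpath
  obtain ⟨t, ht, hts⟩ := rt_dominates hsim S0 k f hk
  exact ⟨k, t, ht, hsim.2.2.2 t f hts hfF⟩
end

section
/- If F is not reachable from S₀ in the automaton, then for all i, R̃ᵢ ∩ F = ∅ and the sequence R̃ᵢ eventually stabilizes (there exists k with R̃ₖ = R̃ₖ₋₁). -/
/-- Downward closure w.r.t. the preorder `x ≤ t ↔ sim t x`. -/
def Cl {V : Type*} (sim : V → V → Prop) (B : Set V) : Set V :=
  {x | ∃ t ∈ B, sim t x}

lemma maxElt_above {V : Type*} [Fintype V] (sim : V → V → Prop)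
    (hrefl : ∀ s, sim s s)
    (htrans : ∀ a b c, sim a b → sim b c → sim a c)
    (B : Set V) {s : V} (hs : s ∈ B) :
    ∃ m ∈ MaxElt sim B, sim m s := by
  classical
  obtain ⟨m, hm, hmin⟩ := Set.exists_min_image {x ∈ B | sim x s}
      (fun x => {y ∈ B | sim y x}.ncard) (Set.toFinite _) ⟨s, hs, hrefl s⟩
  refine ⟨m, ⟨hm.1, ?_⟩, hm.2⟩
  rintro ⟨S', hS'B, hS'm, hmS'⟩
  have h1 : {y ∈ B | sim y S'} ⊆ {y ∈ B | sim y m} := by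
    rintro y ⟨hyB, hyS'⟩
    exact ⟨hyB, htrans y S' m hyS' hS'm⟩
  have hss : {y ∈ B | sim y S'} ⊂ {y ∈ B | sim y m} :=
    (Set.ssubset_iff_of_subset h1).mpr
      ⟨m, ⟨hm.1, hrefl m⟩, fun h => hmS' h.2⟩
  have hlt := Set.ncard_lt_ncard hss (Set.toFinite _)
  have hge := hmin S' ⟨hS'B, htrans S' m s hS'm hm.2⟩
  omega

lemma maxElt_subset {V : Type*} (sim : V → V → Prop) (B : Set V) :
    MaxElt sim B ⊆ B := fun _ h => h.1

theorem stmt7 {V : Type*} [Fintype V] (E : V → V → Prop) (F : Set V)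
    (sim : V → V → Prop) (hsim : IsSimulation E F sim) (S0 : V)
    (hunreach : ¬ ∃ f ∈ F, Relation.ReflTransGen E S0 f) :
    (∀ i : ℕ, Rtiter E sim S0 i ∩ F = ∅) ∧
    (∃ k : ℕ, Rtiter E sim S0 (k + 1) = Rtiter E sim S0 k) := by
  classical
  obtain ⟨hrefl, htrans, hstep, hF⟩ := hsim
  set Rt : ℕ → Set V := Rtiter E sim S0 with hRt
  have hsucc : ∀ i, Rt (i + 1) = MaxElt sim (Rt i ∪ Post E (Rt i)) := fun i => rfl
  -- Part 1
  have hRt_sub_R : ∀ i, Rt i ⊆ Riter E S0 i := by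
    intro i
    induction i with
    | zero => exact le_refl _
    | succ n ih =>
      intro x hx
      rcases (maxElt_subset sim _ hx) with h | h
      · exact Or.inl (ih h)
      · obtain ⟨s, hsm, hE⟩ := h
        exact Or.inr ⟨s, ih hsm, hE⟩
  have hR_reach : ∀ i, Riter E S0 i ⊆ {s | Relation.ReflTransGen E S0 s} := by
    intro i
    induction i with
    | zero => rintro x rfl; exact Relation.ReflTransGen.refl
    | succ n ih =>
      rintro x (h | ⟨s, hsm, hE⟩)
      · exact ih h
      · exact (ih hsm).tail hE
  have part1 : ∀ i : ℕ, Rt i ∩ F = ∅ := by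
    intro i
    ext x
    simp only [Set.mem_inter_iff, Set.mem_empty_iff_false, iff_false, not_and]
    intro hx hxF
    exact hunreach ⟨x, hxF, hR_reach i (hRt_sub_R i hx)⟩
  refine ⟨part1, ?_⟩
  -- Part 2
  -- closures are nondecreasing
  have hcl_step : ∀ i, Cl sim (Rt i) ⊆ Cl sim (Rt (i + 1)) := by
    rintro i x ⟨t, ht, hxt⟩
    obtain ⟨m, hm, hmt⟩ := maxElt_above sim hrefl htrans
      (Rt i ∪ Post E (Rt i)) (Or.inl ht)
    exact ⟨m, by rw [hsucc]; exact hm, htrans m t x hmt hxt⟩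
  have hcl_mono : ∀ i j, i ≤ j → Cl sim (Rt i) ⊆ Cl sim (Rt j) := by
    intro i j hij
    induction j with
    | zero => rw [Nat.le_zero.mp hij]
    | succ n ih =>
      rcases Nat.lt_succ_iff_lt_or_eq.mp (Nat.lt_succ_of_le hij) with h | h
      · exact (ih (Nat.lt_succ_iff.mp h)).trans (hcl_step n)
      · rw [h]
  -- key monotonicity lemma when closures stabilize
  have hkey : ∀ i, Cl sim (Rt (i + 1)) = Cl sim (Rt (i + 2)) → Rt (i + 1) ⊆ Rt (i + 2) := by
    intro i hcl s hsmem
    have hsB : s ∈ Rt i ∪ Post E (Rt i) := maxElt_subset sim _ hsmem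
    have hsMax : ¬ ∃ S' ∈ Rt i ∪ Post E (Rt i), sim S' s ∧ ¬ sim s S' := hsmem.2
    rw [hsucc]
    refine ⟨Or.inl hsmem, ?_⟩
    rintro ⟨t, htB, hts, hst⟩
    obtain ⟨m, hm, hmt⟩ := maxElt_above sim hrefl htrans
      (Rt (i + 1) ∪ Post E (Rt (i + 1))) htB
    have htCl : t ∈ Cl sim (Rt (i + 1)) := by
      rw [hcl]; exact ⟨m, by rw [hsucc]; exact hm, hmt⟩
    obtain ⟨u, hu, hut⟩ := htCl
    exact hsMax ⟨u, maxElt_subset sim _ hu, htrans u t s hut hts,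
      fun h => hst (htrans s u t h hut)⟩
  -- pigeonhole: two equal iterates
  obtain ⟨a, b, hab, heq⟩ := Finite.exists_ne_map_eq_of_infinite Rt
  obtain ⟨i, j, hij, hijeq⟩ : ∃ i j, i < j ∧ Rt i = Rt j := by
    rcases lt_or_gt_of_ne hab with h | h
    · exact ⟨a, b, h, heq⟩
    · exact ⟨b, a, h, heq.symm⟩
  set p := j - i with hp
  have hp1 : 1 ≤ p := by omega
  have hper : ∀ d, Rt (i + d + p) = Rt (i + d) := by
    intro d
    induction d with
    | zero => simpa [hp, Nat.add_sub_cancel' (le_of_lt hij)] using hijeq.symm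
    | succ n ih =>
      have : i + (n + 1) + p = (i + n + p) + 1 := by omega
      rw [this, hsucc, ih, ← hsucc]
      congr 1
  have hper' : ∀ q, Rt (i + q * p) = Rt i := by
    intro q
    induction q with
    | zero => simp
    | succ n ih =>
      have : i + (n + 1) * p = i + n * p + p := by ring
      rw [this]
      have := hper (n * p)
      rwa [ih] at this
  -- closures constant from i on
  have hclconst : ∀ m, i ≤ m → Cl sim (Rt m) = Cl sim (Rt i) := by
    intro m hm
    have h1 : Cl sim (Rt i) ⊆ Cl sim (Rt m) := hcl_mono i m hm
    have h2 : Cl sim (Rt m) ⊆ Cl sim (Rt (i + m * p)) := by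
      apply hcl_mono
      calc m ≤ m * p := Nat.le_mul_of_pos_right m (by omega)
        _ ≤ i + m * p := Nat.le_add_left _ _
    rw [hper' m] at h2
    exact le_antisymm h2 h1
  -- Rt monotone from i+1 on
  have hmono : ∀ m, i ≤ m → Rt (m + 1) ⊆ Rt (m + 2) := by
    intro m hm
    apply hkey
    rw [hclconst (m + 1) (by omega), hclconst (m + 2) (by omega)]
  have hchain : ∀ a b, i + 1 ≤ a → a ≤ b → Rt a ⊆ Rt b := by
    intro a b ha hab
    induction b with
    | zero => rw [Nat.le_zero.mp hab]
    | succ n ih =>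
      rcases Nat.lt_succ_iff_lt_or_eq.mp (Nat.lt_succ_of_le hab) with h | h
      · have hi : i ≤ n - 1 := by omega
        have hsub := hmono (n - 1) hi
        have h1 : n - 1 + 1 = n := by omega
        have h2 : n - 1 + 2 = n + 1 := by omega
        rw [h1, h2] at hsub
        exact (ih (Nat.lt_succ_iff.mp h)).trans hsub
      · rw [h]
  refine ⟨i + 1, le_antisymm ?_ ?_⟩
  · -- Rt (i+2) ⊆ Rt (i+1)
    have h1 : Rt (i + 1 + 1) ⊆ Rt (i + 1 + p) := hchain _ _ (by omega) (by omega)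
    have h2 : Rt (i + 1 + p) = Rt (i + 1) := hper 1
    rw [h2] at h1
    exact h1
  · exact hmono i le_rfl
end

section
/- The idle tasks preorder is preserved under request transitions: if S₂ ⪰_idle S₁ and S₁ →^{τ'} S̄₁ for some τ' ⊆ Eligible(S₁), then the unique state S̄₂ with S₂ →^{τ'} S̄₂ satisfies S̄₂ ⪰_idle S̄₁. -/
/-- A system state of a task system with `n` tasks: each task has an
earliest next arrival time `nat` and a remaining computation time `rct`. -/
structure SysState (n : ℕ) where
  nat : Fin n → ℕ
  rct : Fin n → ℕ

/-- The set of active tasks in a state. -/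
def Active {n : ℕ} (S : SysState n) : Finset (Fin n) :=
  Finset.univ.filter fun i => 0 < S.rct i

/-- The set of eligible tasks in a state. -/
def Eligible {n : ℕ} (S : SysState n) : Set (Fin n) :=
  {i | S.nat i = 0 ∧ S.rct i = 0}

/-- The idle tasks preorder: `S1 ⪰_idle S2`. -/
def IdleSim {n : ℕ} (S1 S2 : SysState n) : Prop :=
  S1.rct = S2.rct ∧
  (∀ i, S1.rct i = 0 → S1.nat i ≤ S2.nat i) ∧
  (∀ i, 0 < S1.rct i → S1.nat i = S2.nat i)

/-- Laxity of task `i` in state `S` (over the integers). -/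
def lax {n : ℕ} (T D : Fin n → ℕ) (S : SysState n) (i : Fin n) : ℤ :=
  (S.nat i : ℤ) - ((T i : ℤ) - (D i : ℤ)) - (S.rct i : ℤ)

/-- Failure states: some task has negative laxity. -/
def Fail {n : ℕ} (T D : Fin n → ℕ) : Set (SysState n) :=
  {S | ∃ i, lax T D S i < 0}

/-- `S'` is the `τ'`-request successor of `S`. -/
def ReqSucc {n : ℕ} (T C : Fin n → ℕ) (τ' : Set (Fin n))
    (S S' : SysState n) : Prop :=
  (∀ i ∈ τ', S'.nat i = T i ∧ S'.rct i = C i) ∧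
  (∀ i ∉ τ', S'.nat i = S.nat i ∧ S'.rct i = S.rct i)

/-- `S'` is the clock-tick successor of `S` under scheduler `Run`. -/
def TickSucc {n : ℕ} (Run : SysState n → Finset (Fin n))
    (S S' : SysState n) : Prop :=
  (∀ i ∈ Run S, S'.rct i = S.rct i - 1) ∧
  (∀ i ∉ Run S, S'.rct i = S.rct i) ∧
  (∀ i, S'.nat i = S.nat i - 1)

/-- `Run` is a valid scheduler on `m` processors. -/
def IsScheduler {n : ℕ} (m : ℕ) (Run : SysState n → Finset (Fin n)) : Prop :=
  ∀ S, Run S ⊆ Active S ∧ (Run S).card ≤ m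

/-- `Run` is memoryless. -/
def Memoryless {n : ℕ} (Run : SysState n → Finset (Fin n)) : Prop :=
  ∀ S1 S2 : SysState n, Active S1 = Active S2 →
    (∀ i ∈ Active S1, S1.nat i = S2.nat i ∧ S1.rct i = S2.rct i) →
    Run S1 = Run S2

/-- Edge relation of the automaton `A(τ, Run)`: a request transition
followed by a clock tick. -/
def Edge {n : ℕ} (T C : Fin n → ℕ) (Run : SysState n → Finset (Fin n))
    (S1 S2 : SysState n) : Prop :=
  ∃ (S' : SysState n) (τ' : Set (Fin n)), τ' ⊆ Eligible S1 ∧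
    ReqSucc T C τ' S1 S' ∧ TickSucc Run S' S2

theorem stmt12 {n : ℕ} (T C : Fin n → ℕ) (τ' : Set (Fin n))
    (S1 S2 Sb1 Sb2 : SysState n) (h : IdleSim S2 S1)
    (hτ : τ' ⊆ Eligible S1)
    (h1 : ReqSucc T C τ' S1 Sb1) (h2 : ReqSucc T C τ' S2 Sb2) :
    IdleSim Sb2 Sb1 := by
  obtain ⟨hrct, hnat0, hnatpos⟩ := h
  obtain ⟨h1in, h1out⟩ := h1
  obtain ⟨h2in, h2out⟩ := h2
  refine ⟨?_, ?_, ?_⟩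
  · funext i
    by_cases hi : i ∈ τ'
    · rw [(h2in i hi).2, (h1in i hi).2]
    · rw [(h2out i hi).2, (h1out i hi).2, ← hrct]
  · intro i hz
    by_cases hi : i ∈ τ'
    · rw [(h2in i hi).1, (h1in i hi).1]
    · rw [(h2out i hi).1, (h1out i hi).1]
      apply hnat0
      rw [← (h2out i hi).2]; exact hz
  · intro i hz
    by_cases hi : i ∈ τ'
    · rw [(h2in i hi).1, (h1in i hi).1]
    · rw [(h2out i hi).1, (h1out i hi).1]
      apply hnatpos
      rw [← (h2out i hi).2]; exact hz
end

section
/- The idle tasks preorder is preserved under clock-tick transitions for memoryless schedulers: if S̄₂ ⪰_idle S̄₁ and Run is memoryless, then the clock-tick successors S₁' and S₂' of S̄₁ and S̄₂ under Run satisfy S₂' ⪰_idle S₁'. -/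
theorem stmt13 {n m : ℕ} (Run : SysState n → Finset (Fin n))
    (hRun : IsScheduler m Run) (hmem : Memoryless Run)
    (Sb1 Sb2 S1' S2' : SysState n) (h : IdleSim Sb2 Sb1)
    (h1 : TickSucc Run Sb1 S1') (h2 : TickSucc Run Sb2 S2') :
    IdleSim S2' S1' := by
  obtain ⟨hrct, hnat0, hnatpos⟩ := h
  have hAct : Active Sb2 = Active Sb1 := by
    unfold Active; simp [hrct]
  have hrun : Run Sb2 = Run Sb1 := by
    apply hmem _ _ hAct
    intro i hi
    simp only [Active, Finset.mem_filter] at hi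
    exact ⟨hnatpos i hi.2, congrFun hrct i⟩
  obtain ⟨h2a, h2b, h2c⟩ := h2
  obtain ⟨h1a, h1b, h1c⟩ := h1
  have hr : ∀ i, S2'.rct i = S1'.rct i := by
    intro i
    by_cases hi : i ∈ Run Sb1
    · rw [h1a i hi, h2a i (hrun ▸ hi), hrct]
    · rw [h1b i hi, h2b i (fun c => hi (hrun ▸ c)), hrct]
  refine ⟨funext hr, ?_, ?_⟩
  · intro i hz
    rw [h2c, h1c]
    rcases Nat.eq_zero_or_pos (Sb2.rct i) with h0 | hp
    · exact Nat.sub_le_sub_right (hnat0 i h0) 1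
    · rw [hnatpos i hp]
  · intro i hp
    rw [h2c, h1c]
    by_cases hi : i ∈ Run Sb2
    · have := hRun Sb2
      have hact := this.1 hi
      simp only [Active, Finset.mem_filter] at hact
      rw [hnatpos i hact.2]
    · rw [h2b i hi] at hp
      rw [hnatpos i hp]
end
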